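/- arXiv:1802.03126 — 6 statements merged into one kernel-verified Lean document; each statement's English description precedes it below -/
import Mathlib

section
/- Let A be an m×n real matrix whose rows a_1^T,...,a_m^T all have unit Euclidean norm, let b ∈ ℝ^m, let x ∈ ℝ^n be any fixed vector, and set e = Ax − b. Let x_k ∈ ℝ^n, and suppose ‖Ax_k − b‖_∞ > 4‖e‖_∞. Let i be an index maximizing (a_i^T x_k − b_i)^2 over all rows, and define the Motzkin iterate x_{k+1} = x_k + (b_i − a_i^T x_k) a_i. Then ‖x_{k+1} − x‖² ≤ ‖x_k − x‖² − (1/2)‖Ax_k − b‖_∞². -/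
/-- **Motzkin progress lemma (Lemma 1).**
`A` is an `m × n` real matrix whose rows `a i = A i` all have unit Euclidean norm,
`b ∈ ℝ^m`, `x ∈ ℝ^n` is any fixed vector and `e = A x - b`.  The `‖·‖` on `Fin m → ℝ`
is the sup (max) norm, while Euclidean norms on `ℝ^n` appear squared as sums of squares.
If `‖A xk - b‖_∞ > 4 ‖e‖_∞` and `xk1` is the Motzkin iterate obtained by projecting
onto a most violated constraint `i`, then
`‖xk1 - x‖² ≤ ‖xk - x‖² - (1/2) ‖A xk - b‖_∞²`. -/
theorem motzkin_progress
    {m n : ℕ} (A : Matrix (Fin m) (Fin n) ℝ) (b : Fin m → ℝ)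
    (x xk xk1 : Fin n → ℝ) (e : Fin m → ℝ)
    (hrows : ∀ i : Fin m, ∑ j, (A i j) ^ 2 = 1)
    (he : e = A.mulVec x - b)
    (hres : 4 * ‖e‖ < ‖A.mulVec xk - b‖)
    (i : Fin m)
    (hi : ∀ j : Fin m, (A.mulVec xk j - b j) ^ 2 ≤ (A.mulVec xk i - b i) ^ 2)
    (hupdate : xk1 = xk + (b i - A.mulVec xk i) • A i) :
    ∑ j, (xk1 j - x j) ^ 2 ≤ ∑ j, (xk j - x j) ^ 2 - (1 / 2) * ‖A.mulVec xk - b‖ ^ 2 := by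
  set r : Fin m → ℝ := A.mulVec xk - b with hr
  set c : ℝ := b i - A.mulVec xk i with hc
  -- norm of residual equals |r i|
  have hri : r i = A.mulVec xk i - b i := by simp [hr]
  have habs : ∀ j, |r j| ≤ |r i| := by
    intro j
    have := hi j
    have h1 : (r j) ^ 2 ≤ (r i) ^ 2 := by simpa [hr] using this
    nlinarith [abs_nonneg (r j), abs_nonneg (r i), sq_abs (r j), sq_abs (r i)]
  have hnorm_le : ‖r‖ ≤ |r i| := by
    apply pi_norm_le_iff_of_nonneg (abs_nonneg _) |>.2
    intro j
    simpa [Real.norm_eq_abs] using habs j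
  have hle_norm : |r i| ≤ ‖r‖ := by
    simpa [Real.norm_eq_abs] using norm_le_pi_norm r i
  have hnorm : ‖r‖ = |r i| := le_antisymm hnorm_le hle_norm
  -- error bound
  have heI : |e i| ≤ ‖e‖ := by
    simpa [Real.norm_eq_abs] using norm_le_pi_norm e i
  have heiv : e i = A.mulVec x i - b i := by rw [he]; simp
  -- expansion
  have hexp : ∑ j, (xk1 j - x j) ^ 2
      = ∑ j, (xk j - x j) ^ 2 + 2 * c * (∑ j, A i j * (xk j - x j))
        + c ^ 2 * ∑ j, (A i j) ^ 2 := by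
    rw [hupdate]
    rw [Finset.mul_sum, Finset.mul_sum, ← Finset.sum_add_distrib, ← Finset.sum_add_distrib]
    apply Finset.sum_congr rfl
    intro j _
    simp only [Pi.add_apply, Pi.smul_apply, smul_eq_mul]
    ring
  have hdot : ∑ j, A i j * (xk j - x j) = r i - e i := by
    rw [hri, heiv]
    simp [Matrix.mulVec, dotProduct, mul_sub, Finset.sum_sub_distrib]
  rw [hexp, hdot, hrows i, hnorm]
  have hcr : c = -(r i) := by rw [hc, hri]; ring
  rw [hcr]
  have hre : 4 * ‖e‖ < |r i| := by rwa [← hnorm]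
  have he1 : e i ≤ ‖e‖ := (abs_le.1 heI).2
  have he2 : -‖e‖ ≤ e i := (abs_le.1 heI).1
  have hene : (0:ℝ) ≤ ‖e‖ := norm_nonneg _
  nlinarith [sq_nonneg (r i - 4 * e i), sq_nonneg (r i + 4 * e i), sq_abs (r i),
    abs_nonneg (r i), mul_self_nonneg (‖e‖ - e i), mul_self_nonneg (‖e‖ + e i)]
end

section
/- Let A be an m×n real matrix whose rows a_1^T,...,a_m^T all have unit Euclidean norm, let b ∈ ℝ^m, let x ∈ ℝ^n be any fixed vector, and set e = Ax − b. Let x_k ∈ ℝ^n, let i be an index maximizing (a_i^T x_k − b_i)^2 over all rows, and define x_{k+1} = x_k + (b_i − a_i^T x_k) a_i. Then, without any further assumption, ‖x_{k+1} − x‖² ≤ ‖x_k − x‖² − ‖Ax_k − b‖_∞² + 2‖Ax_k − b‖_∞ ‖e‖_∞. -/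
/-- **One-step Motzkin estimate without any residual assumption.**
`A` is an `m × n` real matrix whose rows `a i = A i` all have unit Euclidean norm,
`b ∈ ℝ^m`, `x ∈ ℝ^n` is any fixed vector and `e = A x - b`.  The `‖·‖` on `Fin m → ℝ`
is the sup (max) norm, while Euclidean norms on `ℝ^n` appear squared as sums of squares.
If `xk1` is the Motzkin iterate obtained from `xk` by projecting onto a most violated
constraint `i`, then
`‖xk1 - x‖² ≤ ‖xk - x‖² - ‖A xk - b‖_∞² + 2 ‖A xk - b‖_∞ ‖e‖_∞`. -/
theorem motzkin_one_step_estimate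
    {m n : ℕ} (A : Matrix (Fin m) (Fin n) ℝ) (b : Fin m → ℝ)
    (x xk xk1 : Fin n → ℝ) (e : Fin m → ℝ)
    (hrows : ∀ i : Fin m, ∑ j, (A i j) ^ 2 = 1)
    (he : e = A.mulVec x - b)
    (i : Fin m)
    (hi : ∀ j : Fin m, (A.mulVec xk j - b j) ^ 2 ≤ (A.mulVec xk i - b i) ^ 2)
    (hupdate : xk1 = xk + (b i - A.mulVec xk i) • A i) :
    ∑ j, (xk1 j - x j) ^ 2 ≤
      ∑ j, (xk j - x j) ^ 2 - ‖A.mulVec xk - b‖ ^ 2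
        + 2 * ‖A.mulVec xk - b‖ * ‖e‖ := by
  set t : ℝ := b i - A.mulVec xk i with ht
  -- sup norm equals |t|
  have hnorm : ‖A.mulVec xk - b‖ = |t| := by
    apply le_antisymm
    · apply (pi_norm_le_iff_of_nonneg (abs_nonneg _)).2
      intro j
      rw [Real.norm_eq_abs, Pi.sub_apply]
      have h1 := hi j
      have h2 : |A.mulVec xk j - b j| ^ 2 ≤ |t| ^ 2 := by
        rw [sq_abs, sq_abs, ht]; nlinarith
      nlinarith [abs_nonneg (A.mulVec xk j - b j), abs_nonneg t]
    · have := norm_le_pi_norm (A.mulVec xk - b) i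
      rw [Pi.sub_apply, Real.norm_eq_abs] at this
      rwa [ht, abs_sub_comm]
  have hei : |e i| ≤ ‖e‖ := by
    simpa [Real.norm_eq_abs] using norm_le_pi_norm e i
  -- inner product identity
  have hsum : ∑ j, A i j * (xk j - x j) = -t - e i := by
    have : ∑ j, A i j * (xk j - x j)
        = (∑ j, A i j * xk j) - ∑ j, A i j * x j := by
      rw [← Finset.sum_sub_distrib]; exact Finset.sum_congr rfl fun j _ => by ring
    rw [this, he]
    simp only [Pi.sub_apply, Matrix.mulVec, dotProduct, ht]
    ring
  have key : ∑ j, (xk1 j - x j) ^ 2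
      = ∑ j, (xk j - x j) ^ 2 - t ^ 2 - 2 * t * e i := by
    have hx1 : ∀ j, xk1 j - x j = (xk j - x j) + t * A i j := by
      intro j; rw [hupdate]; simp [ht]; ring
    calc ∑ j, (xk1 j - x j) ^ 2
        = ∑ j, ((xk j - x j) ^ 2 + 2 * t * (A i j * (xk j - x j))
            + t ^ 2 * (A i j) ^ 2) := by
          exact Finset.sum_congr rfl fun j _ => by rw [hx1 j]; ring
      _ = (∑ j, (xk j - x j) ^ 2) + 2 * t * (∑ j, A i j * (xk j - x j))
            + t ^ 2 * ∑ j, (A i j) ^ 2 := by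
          rw [Finset.sum_add_distrib, Finset.sum_add_distrib, ← Finset.mul_sum,
            ← Finset.mul_sum]
      _ = ∑ j, (xk j - x j) ^ 2 - t ^ 2 - 2 * t * e i := by
          rw [hsum, hrows i]; ring
  rw [key, hnorm]
  have h1 : -(2 * t * e i) ≤ 2 * |t| * ‖e‖ := by
    have h2 : -(2 * t * e i) ≤ 2 * |t| * |e i| := by
      have := neg_abs_le (t * e i)
      calc -(2 * t * e i) = 2 * -(t * e i) := by ring
        _ ≤ 2 * |t * e i| := by nlinarith [neg_abs_le (t * e i), abs_nonneg (t * e i)]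
        _ = 2 * |t| * |e i| := by rw [abs_mul]; ring
    calc -(2 * t * e i) ≤ 2 * |t| * |e i| := h2
      _ ≤ 2 * |t| * ‖e‖ := by
        have := abs_nonneg t
        nlinarith
  nlinarith [sq_abs t]
end

section
/- Let A be an m×n real matrix with full column rank n and rows a_1^T,...,a_m^T of unit Euclidean norm, let σ_min(A) denote its smallest singular value, let b ∈ ℝ^m, let x ∈ ℝ^n be any fixed vector, and set e = Ax − b. Let x_k ∈ ℝ^n satisfy ‖Ax_k − b‖_∞ ≤ 4‖e‖_∞, let i be an index maximizing (a_i^T x_k − b_i)^2 over all rows, and define x_{k+1} = x_k + (b_i − a_i^T x_k) a_i. Then ‖x_{k+1} − x‖² ≤ (25 m σ_min(A)^{−2} + 8) ‖e‖_∞². -/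
/-- **Next-iterate bound once the residual is small (part (iii) of Corollary 1).**
`A` is an `m × n` real matrix (`m ≥ n`) with full column rank `n` and rows of unit
Euclidean norm; `σ` denotes its smallest singular value, which is positive and
satisfies `σ ‖v‖ ≤ ‖A v‖` for all `v` (stated with squared Euclidean norms).
`b ∈ ℝ^m`, `x ∈ ℝ^n` is any fixed vector, `e = A x - b`, and `‖·‖` on `Fin m → ℝ`
is the sup (max) norm.  If `‖A xk - b‖_∞ ≤ 4 ‖e‖_∞` and `xk1` is the Motzkin iterate
obtained from `xk`, then `‖xk1 - x‖² ≤ (25 m σ⁻² + 8) ‖e‖_∞²`. -/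
theorem motzkin_small_residual_next_iterate_bound
    {m n : ℕ} (hmn : n ≤ m) (A : Matrix (Fin m) (Fin n) ℝ)
    (hrank : A.rank = n)
    (hrows : ∀ i : Fin m, ∑ j, (A i j) ^ 2 = 1)
    (σ : ℝ) (hσ : 0 < σ)
    (hσmin : ∀ v : Fin n → ℝ, σ ^ 2 * ∑ j, (v j) ^ 2 ≤ ∑ i, (A.mulVec v i) ^ 2)
    (b : Fin m → ℝ) (x xk xk1 : Fin n → ℝ) (e : Fin m → ℝ)
    (he : e = A.mulVec x - b)
    (hres : ‖A.mulVec xk - b‖ ≤ 4 * ‖e‖)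
    (i : Fin m)
    (hi : ∀ j : Fin m, (A.mulVec xk j - b j) ^ 2 ≤ (A.mulVec xk i - b i) ^ 2)
    (hupdate : xk1 = xk + (b i - A.mulVec xk i) • A i) :
    ∑ j, (xk1 j - x j) ^ 2 ≤ (25 * m * (σ ^ 2)⁻¹ + 8) * ‖e‖ ^ 2 := by
  set E := ‖e‖ with hEdef
  have hE0 : 0 ≤ E := norm_nonneg _
  set c : ℝ := b i - A.mulVec xk i with hc
  clear_value E c
  -- pointwise bounds
  have heb : ∀ j, |e j| ≤ E := by
    intro j
    rw [hEdef]
    simpa [Real.norm_eq_abs] using norm_le_pi_norm e j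
  have hrb : ∀ j, |A.mulVec xk j - b j| ≤ 4 * E := by
    intro j
    have := norm_le_pi_norm (A.mulVec xk - b) j
    simp only [Pi.sub_apply, Real.norm_eq_abs] at this
    exact this.trans hres
  -- A d = r - e pointwise, d = xk - x
  have hAd : ∀ j, A.mulVec (xk - x) j
      = (A.mulVec xk j - b j) - e j := by
    intro j
    rw [Matrix.mulVec_sub]
    simp [he]
  -- bound on ∑ d² via hσmin
  have hσ2 : (0:ℝ) < σ ^ 2 := by positivity
  have hsum1 : σ ^ 2 * ∑ j, (xk j - x j) ^ 2 ≤ (m : ℝ) * (25 * E ^ 2) := by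
    have h1 := hσmin (xk - x)
    have h2 : ∑ j, (A.mulVec (xk - x) j) ^ 2 ≤ ∑ _j : Fin m, 25 * E ^ 2 := by
      apply Finset.sum_le_sum
      intro j _
      rw [hAd j]
      have h3 : |(A.mulVec xk j - b j) - e j| ≤ 5 * E := by
        calc |(A.mulVec xk j - b j) - e j| ≤ |A.mulVec xk j - b j| + |e j| :=
              abs_sub _ _
          _ ≤ 4 * E + E := add_le_add (hrb j) (heb j)
          _ = 5 * E := by ring
        
      nlinarith [abs_nonneg ((A.mulVec xk j - b j) - e j),
        sq_abs ((A.mulVec xk j - b j) - e j)]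
    have h4 : ∑ _j : Fin m, 25 * E ^ 2 = (m : ℝ) * (25 * E ^ 2) := by
      simp [Finset.sum_const, nsmul_eq_mul]
    have h1' : σ ^ 2 * ∑ j, ((xk - x) j) ^ 2 ≤ ∑ j, (A.mulVec (xk - x) j) ^ 2 := h1
    simp only [Pi.sub_apply] at h1'
    linarith
  have hd : ∑ j, (xk j - x j) ^ 2 ≤ 25 * m * (σ ^ 2)⁻¹ * E ^ 2 := by
    rw [← le_div_iff₀' hσ2] at hsum1
    have : (m : ℝ) * (25 * E ^ 2) / σ ^ 2 = 25 * m * (σ ^ 2)⁻¹ * E ^ 2 := by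
      field_simp
    linarith [this ▸ hsum1]
  -- expand the iterate
  have hexp : ∑ j, (xk1 j - x j) ^ 2
      = ∑ j, (xk j - x j) ^ 2 + (2 * c) * (∑ j, A i j * (xk j - x j))
        + c ^ 2 * ∑ j, (A i j) ^ 2 := by
    subst hupdate
    simp only [Pi.add_apply, Pi.smul_apply, smul_eq_mul, ← hc]
    rw [Finset.mul_sum, Finset.mul_sum, ← Finset.sum_add_distrib,
      ← Finset.sum_add_distrib]
    apply Finset.sum_congr rfl
    intro j _
    ring
  have hdot : ∑ j, A i j * (xk j - x j)
      = (A.mulVec xk i - b i) - e i := by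
    have := hAd i
    rw [← this]
    rfl
  rw [hexp, hdot, hrows i]
  have hei : (e i) ^ 2 ≤ E ^ 2 := by
    nlinarith [heb i, abs_nonneg (e i), sq_abs (e i)]
  have hkey : (2 * c) * ((A.mulVec xk i - b i) - e i) + c ^ 2 * 1 ≤ E ^ 2 := by
    have hcc : c = -(A.mulVec xk i - b i) := by rw [hc]; ring
    rw [hcc]
    nlinarith [sq_nonneg ((A.mulVec xk i - b i) - e i), hei]
  have hfin : (0:ℝ) ≤ 7 * E ^ 2 := by positivity
  have hrhs : (25 * (m:ℝ) * (σ ^ 2)⁻¹ + 8) * E ^ 2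
      = 25 * (m:ℝ) * (σ ^ 2)⁻¹ * E ^ 2 + 8 * E ^ 2 := by ring
  rw [hrhs]
  linarith
end

section
/- Let A be an m×n real matrix with full column rank n and rows a_1^T,...,a_m^T of unit Euclidean norm, let b ∈ ℝ^m, let x ∈ ℝ^n be any fixed vector, and set e = Ax − b. Let x_k ∈ ℝ^n be any point and let x_{k+1} be the Motzkin iterate obtained from x_k. Then at least one of the following holds: (i) ‖x_{k+1} − x‖² ≤ ‖x_k − x‖² − (1/2)‖Ax_k − b‖_∞², or both (ii) ‖x_k − x‖² ≤ 25 m σ_min(A)^{−2} ‖e‖_∞² and (iii) ‖x_{k+1} − x‖² ≤ (25 m σ_min(A)^{−2} + 8)‖e‖_∞². -/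
/-- **Corollary 1 (dichotomy).**
`A` is an `m × n` real matrix (`m ≥ n`) with full column rank `n` and rows of unit
Euclidean norm; `σ` denotes its smallest singular value, which is positive and
satisfies `σ ‖v‖ ≤ ‖A v‖` for all `v` (stated with squared Euclidean norms).
`b ∈ ℝ^m`, `x ∈ ℝ^n` is any fixed vector, `e = A x - b`, and `‖·‖` on `Fin m → ℝ`
is the sup (max) norm.  For any point `xk` with Motzkin iterate `xk1`, either
(i) `‖xk1 - x‖² ≤ ‖xk - x‖² - (1/2) ‖A xk - b‖_∞²`, or both
(ii) `‖xk - x‖² ≤ 25 m σ⁻² ‖e‖_∞²` and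
(iii) `‖xk1 - x‖² ≤ (25 m σ⁻² + 8) ‖e‖_∞²`. -/
theorem motzkin_dichotomy
    {m n : ℕ} (hmn : n ≤ m) (A : Matrix (Fin m) (Fin n) ℝ)
    (hrank : A.rank = n)
    (hrows : ∀ i : Fin m, ∑ j, (A i j) ^ 2 = 1)
    (σ : ℝ) (hσ : 0 < σ)
    (hσmin : ∀ v : Fin n → ℝ, σ ^ 2 * ∑ j, (v j) ^ 2 ≤ ∑ i, (A.mulVec v i) ^ 2)
    (b : Fin m → ℝ) (x xk xk1 : Fin n → ℝ) (e : Fin m → ℝ)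
    (he : e = A.mulVec x - b)
    (i : Fin m)
    (hi : ∀ j : Fin m, (A.mulVec xk j - b j) ^ 2 ≤ (A.mulVec xk i - b i) ^ 2)
    (hupdate : xk1 = xk + (b i - A.mulVec xk i) • A i) :
    (∑ j, (xk1 j - x j) ^ 2 ≤
        ∑ j, (xk j - x j) ^ 2 - (1 / 2) * ‖A.mulVec xk - b‖ ^ 2) ∨
    ((∑ j, (xk j - x j) ^ 2 ≤ 25 * m * (σ ^ 2)⁻¹ * ‖e‖ ^ 2) ∧
     (∑ j, (xk1 j - x j) ^ 2 ≤ (25 * m * (σ ^ 2)⁻¹ + 8) * ‖e‖ ^ 2)) := by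
  set r : ℝ := A.mulVec xk i - b i with hr
  clear_value r
  -- componentwise abs bounds
  have habs : ∀ j, |A.mulVec xk j - b j| ≤ |r| := by
    intro j
    have h := hi j
    have h' : (A.mulVec xk j - b j) ^ 2 ≤ |r| ^ 2 := by rwa [sq_abs]
    have := abs_le_of_sq_le_sq' h' (abs_nonneg r)
    exact abs_le.mpr this
  have hej : ∀ j, |e j| ≤ ‖e‖ := by
    intro j
    have := norm_le_pi_norm e j
    simpa [Real.norm_eq_abs] using this
  -- key identity
  have hmv : ∑ j, A i j * (xk j - x j) = A.mulVec xk i - A.mulVec x i := by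
    simp [Matrix.mulVec, dotProduct, mul_sub, Finset.sum_sub_distrib]
  have hsplit : ∀ j, (xk1 j - x j) ^ 2 =
      (xk j - x j) ^ 2 + r ^ 2 * (A i j) ^ 2 + (-2 * r) * (A i j * (xk j - x j)) := by
    intro j
    rw [hupdate]
    simp only [Pi.add_apply, Pi.smul_apply, smul_eq_mul, hr]
    ring
  have key : ∑ j, (xk1 j - x j) ^ 2 =
      ∑ j, (xk j - x j) ^ 2 - r ^ 2 + 2 * r * e i := by
    simp_rw [hsplit]
    rw [Finset.sum_add_distrib, Finset.sum_add_distrib, ← Finset.mul_sum, ← Finset.mul_sum,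
      hrows i, hmv, he]
    simp only [Pi.sub_apply]
    rw [hr]
    ring
  have hre : r * e i ≤ |r| * ‖e‖ := by
    calc r * e i ≤ |r * e i| := le_abs_self _
    _ = |r| * |e i| := abs_mul _ _
    _ ≤ |r| * ‖e‖ := mul_le_mul_of_nonneg_left (hej i) (abs_nonneg r)
  by_cases hcase : 4 * ‖e‖ ≤ |r|
  · -- case (i)
    left
    have hnorm : ‖A.mulVec xk - b‖ = |r| := by
      apply le_antisymm
      · apply pi_norm_le_iff_of_nonneg (abs_nonneg r) |>.mpr
        intro j
        simpa [Real.norm_eq_abs] using habs j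
      · have := norm_le_pi_norm (A.mulVec xk - b) i
        simpa [Real.norm_eq_abs, hr] using this
    rw [key, hnorm]
    nlinarith [hre, sq_abs r, abs_nonneg r, norm_nonneg e,
      mul_le_mul_of_nonneg_left hcase (abs_nonneg r)]
  · push_neg at hcase
    right
    have hii : ∑ j, (xk j - x j) ^ 2 ≤ 25 * m * (σ ^ 2)⁻¹ * ‖e‖ ^ 2 := by
      have h1 := hσmin (xk - x)
      simp only [Pi.sub_apply] at h1
      have h2 : ∀ j, (A.mulVec (xk - x) j) ^ 2 ≤ 25 * ‖e‖ ^ 2 := by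
        intro j
        have hAe : A.mulVec (xk - x) j = (A.mulVec xk j - b j) - e j := by
          rw [he]
          simp [Matrix.mulVec_sub, Pi.sub_apply]
        rw [hAe]
        have h3 := habs j
        have h4 := hej j
        nlinarith [sq_abs (A.mulVec xk j - b j), sq_abs (e j),
          abs_nonneg (A.mulVec xk j - b j), abs_nonneg (e j), norm_nonneg e,
          neg_abs_le ((A.mulVec xk j - b j) * e j),
          abs_mul (A.mulVec xk j - b j) (e j),
          mul_le_mul h3 (le_of_lt hcase) (abs_nonneg _) (abs_nonneg r)]
      have h5 : ∑ j, (A.mulVec (xk - x) j) ^ 2 ≤ m * (25 * ‖e‖ ^ 2) := by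
        calc ∑ j, (A.mulVec (xk - x) j) ^ 2 ≤ ∑ _j : Fin m, 25 * ‖e‖ ^ 2 :=
          Finset.sum_le_sum fun j _ => h2 j
        _ = m * (25 * ‖e‖ ^ 2) := by simp [Finset.sum_const, mul_comm]
      have hσ2 : (0:ℝ) < σ ^ 2 := pow_pos hσ 2
      rw [show 25 * (m:ℝ) * (σ ^ 2)⁻¹ * ‖e‖ ^ 2 = (m * (25 * ‖e‖ ^ 2)) / σ ^ 2 by ring]
      rw [le_div_iff₀ hσ2]
      calc (∑ j, (xk j - x j) ^ 2) * σ ^ 2 = σ ^ 2 * ∑ j, (xk j - x j) ^ 2 := by ring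
      _ ≤ ∑ j, (A.mulVec (xk - x) j) ^ 2 := h1
      _ ≤ m * (25 * ‖e‖ ^ 2) := h5
    refine ⟨hii, ?_⟩
    rw [key]
    have h6 : 2 * r * e i ≤ 8 * ‖e‖ ^ 2 := by
      nlinarith [hre, norm_nonneg e, abs_nonneg r]
    nlinarith [sq_nonneg r, hii, h6, norm_nonneg e, sq_nonneg ‖e‖]
end

section
/- Let A be an m×n real matrix with full column rank n and rows of unit Euclidean norm, let b ∈ ℝ^m, let x ∈ ℝ^n be fixed, and set e = Ax − b. Let x_k ∈ ℝ^n satisfy ‖Ax_k − b‖_∞ > 4‖e‖_∞ and A x_k ≠ A x, and let x_{k+1} be the Motzkin iterate obtained from x_k. Let γ_k = ‖A(x_k − x)‖² / ‖A(x_k − x)‖_∞². Then ‖x_{k+1} − x‖² ≤ (1 − σ_min(A)²/(4γ_k)) ‖x_k − x‖² + (1/2)‖e‖_∞². -/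
/-- **One-step accelerated contraction via the dynamic range (inequality (11)).**
`A` is an `m × n` real matrix (`m ≥ n`) with full column rank `n` and rows of unit
Euclidean norm; `σ` denotes its smallest singular value, which is positive and
satisfies `σ ‖v‖ ≤ ‖A v‖` for all `v` (stated with squared Euclidean norms).
`b ∈ ℝ^m`, `x ∈ ℝ^n` is fixed, `e = A x - b`, and `‖·‖` on `Fin m → ℝ` is the sup
(max) norm.  Suppose `‖A xk - b‖_∞ > 4 ‖e‖_∞` and `A xk ≠ A x`, let `xk1` be the
Motzkin iterate obtained from `xk`, and let
`γ = ‖A (xk - x)‖² / ‖A (xk - x)‖_∞²` be the dynamic range.  Then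
`‖xk1 - x‖² ≤ (1 - σ²/(4 γ)) ‖xk - x‖² + (1/2) ‖e‖_∞²`. -/
theorem motzkin_dynamic_range_contraction
    {m n : ℕ} (hmn : n ≤ m) (A : Matrix (Fin m) (Fin n) ℝ)
    (hrank : A.rank = n)
    (hrows : ∀ i : Fin m, ∑ j, (A i j) ^ 2 = 1)
    (σ : ℝ) (hσ : 0 < σ)
    (hσmin : ∀ v : Fin n → ℝ, σ ^ 2 * ∑ j, (v j) ^ 2 ≤ ∑ i, (A.mulVec v i) ^ 2)
    (b : Fin m → ℝ) (x xk xk1 : Fin n → ℝ) (e : Fin m → ℝ)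
    (he : e = A.mulVec x - b)
    (hres : 4 * ‖e‖ < ‖A.mulVec xk - b‖)
    (hne : A.mulVec xk ≠ A.mulVec x)
    (i : Fin m)
    (hi : ∀ j : Fin m, (A.mulVec xk j - b j) ^ 2 ≤ (A.mulVec xk i - b i) ^ 2)
    (hupdate : xk1 = xk + (b i - A.mulVec xk i) • A i)
    (γ : ℝ)
    (hγ : γ = (∑ i, (A.mulVec (xk - x) i) ^ 2) / ‖A.mulVec (xk - x)‖ ^ 2) :
    ∑ j, (xk1 j - x j) ^ 2 ≤
      (1 - σ ^ 2 / (4 * γ)) * ∑ j, (xk j - x j) ^ 2 + (1 / 2) * ‖e‖ ^ 2 := by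
  set u : Fin m → ℝ := A.mulVec (xk - x) with hu
  set r : Fin m → ℝ := A.mulVec xk - b with hr
  set c : ℝ := A.mulVec xk i - b i with hc
  set D : ℝ := ∑ j, (xk j - x j) ^ 2 with hD
  set U : ℝ := ∑ j, (u j) ^ 2 with hU
  set N : ℝ := ‖u‖ ^ 2 with hN
  have hue : u = r - e := by
    rw [hu, hr, he, Matrix.mulVec_sub]
    abel
  have hrc : r i = c := rfl
  clear_value N U D c r u
  -- |r j| ≤ |c| for all j, so ‖r‖ ≤ |c|
  have hrle : ‖r‖ ≤ |c| := by
    rw [pi_norm_le_iff_of_nonneg (abs_nonneg c)]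
    intro j
    have hj : (r j) ^ 2 ≤ c ^ 2 := by rw [hr]; simpa using hi j
    rw [Real.norm_eq_abs]
    nlinarith [abs_nonneg (r j), abs_nonneg c, sq_abs (r j), sq_abs c]
  have hcr : |c| ≤ ‖r‖ := by
    rw [← hrc, ← Real.norm_eq_abs]
    exact norm_le_pi_norm r i
  have hec : 4 * ‖e‖ < |c| := by linarith
  have hene : ‖e‖ ≥ 0 := norm_nonneg e
  -- u ≠ 0
  have hune : u ≠ 0 := by
    rw [hu, Matrix.mulVec_sub]
    intro h
    exact hne (sub_eq_zero.mp h)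
  have hNpos : 0 < N := by
    rw [hN]
    exact pow_pos (norm_pos_iff.mpr hune) 2
  have hUpos : 0 < U := by
    obtain ⟨j, hj⟩ := Function.ne_iff.mp hune
    have hj2 : 0 < (u j) ^ 2 := by
      have := abs_pos.mpr hj
      nlinarith [sq_abs (u j)]
    rw [hU]
    exact Finset.sum_pos' (fun k _ => sq_nonneg (u k)) ⟨j, Finset.mem_univ j, hj2⟩
  -- σ² D ≤ U
  have hσD : σ ^ 2 * D ≤ U := by
    have h := hσmin (xk - x)
    simpa [hD, hU, hu, Pi.sub_apply] using h
  -- ‖u‖ ≤ |c| + ‖e‖ ≤ (5/4)|c|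
  have hule : ‖u‖ ≤ |c| + ‖e‖ := by
    rw [hue]
    exact le_trans (norm_sub_le r e) (by linarith)
  have hNle : N ≤ (25 / 16) * c ^ 2 := by
    rw [hN]
    have h1 : ‖u‖ ≤ (5 / 4) * |c| := by linarith
    have h2 : ‖u‖ ^ 2 ≤ ((5 / 4) * |c|) ^ 2 := pow_le_pow_left₀ (norm_nonneg u) h1 2
    have h3 : ((5 / 4) * |c|) ^ 2 = (25 / 16) * c ^ 2 := by
      rw [mul_pow, sq_abs]; norm_num
    linarith
  -- expansion identity
  have hui : u i = c - e i := by rw [hue]; simp [hrc]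
  have huival : u i = ∑ j, A i j * (xk j - x j) := by
    rw [hu]
    simp [Matrix.mulVec, dotProduct, Pi.sub_apply, mul_sub, Finset.sum_sub_distrib]
  have key : ∑ j, (xk1 j - x j) ^ 2 = D - 2 * c * (u i) + c ^ 2 := by
    have expand : ∀ j, (xk1 j - x j) ^ 2 =
        (xk j - x j) ^ 2 - 2 * c * (A i j * (xk j - x j)) + c ^ 2 * (A i j) ^ 2 := by
      intro j
      rw [hupdate]
      simp only [Pi.add_apply, Pi.smul_apply, smul_eq_mul, hc]
      ring
    rw [Finset.sum_congr rfl (fun j _ => expand j)]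
    rw [Finset.sum_add_distrib, Finset.sum_sub_distrib, ← Finset.mul_sum, ← Finset.mul_sum,
      hrows i, huival, hD]
    ring
  -- main bound: S1 ≤ D - c²/2
  have hei : |e i| ≤ ‖e‖ := by
    rw [← Real.norm_eq_abs]; exact norm_le_pi_norm e i
  have hS1 : ∑ j, (xk1 j - x j) ^ 2 ≤ D - c ^ 2 / 2 := by
    rw [key, hui]
    nlinarith [abs_nonneg c, sq_abs c, abs_le.mp hei, neg_abs_le (e i), le_abs_self (e i),
      neg_abs_le c, le_abs_self c]
  -- γ and the contraction factor
  have hDnn : 0 ≤ D := by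
    rw [hD]
    exact Finset.sum_nonneg fun j _ => sq_nonneg _
  have hγval : γ = U / N := hγ
  have hN0 : N ≠ 0 := ne_of_gt hNpos
  have hU0 : U ≠ 0 := ne_of_gt hUpos
  have hfrac : σ ^ 2 / (4 * γ) * D ≤ c ^ 2 / 2 := by
    have heq : σ ^ 2 / (4 * γ) = σ ^ 2 * N / (4 * U) := by
      rw [hγval]
      field_simp
    rw [heq, div_mul_eq_mul_div, div_le_iff₀ (by linarith : (0:ℝ) < 4 * U)]
    have t2 : (σ ^ 2 * D) * N ≤ U * N := mul_le_mul_of_nonneg_right hσD (le_of_lt hNpos)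
    have t3 : U * N ≤ U * ((25 / 16) * c ^ 2) := mul_le_mul_of_nonneg_left hNle (le_of_lt hUpos)
    have t5 : 0 ≤ U * c ^ 2 := mul_nonneg (le_of_lt hUpos) (sq_nonneg c)
    linarith [t2, t3, t5]
  have hring : (1 - σ ^ 2 / (4 * γ)) * D = D - σ ^ 2 / (4 * γ) * D := by ring
  have hE : 0 ≤ ‖e‖ ^ 2 := sq_nonneg _
  linarith [hS1, hfrac]
end

section
/- Let A be an m×n real matrix with full column rank n and rows of unit Euclidean norm, let b ∈ ℝ^m, let x ∈ ℝ^n be fixed, and set e = Ax − b. Let x_0, x_1, ..., x_K be iterates of Motzkin's method started at an arbitrary x_0, and suppose that for every k with 0 ≤ k ≤ K−1 the iterate satisfies ‖Ax_k − b‖_∞ > 4‖e‖_∞ and A x_k ≠ A x. With γ_k = ‖A(x_k − x)‖²/‖A(x_k − x)‖_∞², it holds that ‖x_K − x‖² ≤ (∏_{k=0}^{K−1} (1 − σ_min(A)²/(4γ_k))) ‖x_0 − x‖² + 2 m σ_min(A)^{−2} ‖e‖_∞². -/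
open Finset

set_option maxHeartbeats 1000000 in
private lemma motzkin_step {m n : ℕ} {A : Matrix (Fin m) (Fin n) ℝ}
    (hrows : ∀ i : Fin m, ∑ j, (A i j) ^ 2 = 1)
    {σ : ℝ} (hσ : 0 < σ)
    (hσmin : ∀ v : Fin n → ℝ, σ ^ 2 * ∑ j, (v j) ^ 2 ≤ ∑ i, (A.mulVec v i) ^ 2)
    {b : Fin m → ℝ} {x : Fin n → ℝ} {e : Fin m → ℝ}
    (he : e = A.mulVec x - b)
    {y y' : Fin n → ℝ} {i : Fin m}
    (hmax : ∀ j : Fin m, (A.mulVec y j - b j) ^ 2 ≤ (A.mulVec y i - b i) ^ 2)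
    (hstep : y' = y + (b i - A.mulVec y i) • A i)
    (hres : 4 * ‖e‖ < ‖A.mulVec y - b‖)
    (hne : A.mulVec y ≠ A.mulVec x)
    {γ : ℝ}
    (hγ : γ = (∑ i, (A.mulVec (y - x) i) ^ 2) / ‖A.mulVec (y - x)‖ ^ 2) :
    0 ≤ 1 - σ ^ 2 / (4 * γ) ∧
      ∑ j, (y' j - x j) ^ 2 ≤ (1 - σ ^ 2 / (4 * γ)) * ∑ j, (y j - x j) ^ 2 := by
  set w : Fin m → ℝ := A.mulVec (y - x) with hw
  have hwv : w = A.mulVec y - A.mulVec x := by rw [hw, Matrix.mulVec_sub]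
  set D : ℝ := ∑ j, (y j - x j) ^ 2 with hD
  set S : ℝ := ∑ i, (w i) ^ 2 with hS
  set N : ℝ := ‖w‖ with hN
  set E : ℝ := ‖e‖ with hE
  set M : ℝ := ‖A.mulVec y - b‖ with hM
  set r : ℝ := w i with hr
  set ε : ℝ := e i with hε
  have hEnn : 0 ≤ E := norm_nonneg _
  have hf : ∀ j, A.mulVec y j - b j = w j + e j := by
    intro j
    rw [hwv, he]
    simp
  have hEj : ∀ j, |e j| ≤ E := fun j => by
    have := norm_le_pi_norm e j
    simpa [Real.norm_eq_abs] using this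
  have hfj : ∀ j, |A.mulVec y j - b j| ≤ M := fun j => by
    have := norm_le_pi_norm (A.mulVec y - b) j
    simpa [Real.norm_eq_abs] using this
  have hMi : M = |r + ε| := by
    have h1 : |r + ε| ≤ M := by rw [← hf i]; exact hfj i
    have h2 : M ≤ |r + ε| := by
      rw [hM]
      apply (pi_norm_le_iff_of_nonneg (abs_nonneg _)).mpr
      intro j
      rw [Real.norm_eq_abs, ← hf i]
      simp only [Pi.sub_apply]
      have hmj := hmax j
      have : |A.mulVec y j - b j| ^ 2 ≤ |A.mulVec y i - b i| ^ 2 := by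
        simpa [sq_abs] using hmj
      nlinarith [abs_nonneg (A.mulVec y j - b j), abs_nonneg (A.mulVec y i - b i), sq_abs (A.mulVec y j - b j), sq_abs (A.mulVec y i - b i)]
    linarith
  have hNle : N ≤ M + E := by
    rw [hN]
    apply (pi_norm_le_iff_of_nonneg (by positivity)).mpr
    intro j
    rw [Real.norm_eq_abs]
    have hwj : w j = (A.mulVec y j - b j) - e j := by rw [hf j]; ring
    calc |w j| = |(A.mulVec y j - b j) - e j| := by rw [hwj]
      _ ≤ |A.mulVec y j - b j| + |e j| := abs_sub (A.mulVec y j - b j) (e j)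
      _ ≤ M + E := add_le_add (hfj j) (hEj j)
  have hwne : w ≠ 0 := by rw [hwv]; exact sub_ne_zero_of_ne hne
  have hNpos : 0 < N := by rw [hN]; exact norm_pos_iff.mpr hwne
  have hDnn : 0 ≤ D := Finset.sum_nonneg fun _ _ => sq_nonneg _
  have hSpos : 0 < S := by
    obtain ⟨j, hj⟩ := Function.ne_iff.mp hwne
    have hj' : w j ≠ 0 := by simpa using hj
    have h1 : (w j) ^ 2 ≤ S := by rw [hS]; exact Finset.single_le_sum (f := fun i => w i ^ 2) (fun _ _ => sq_nonneg _) (Finset.mem_univ j)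
    have h2 : 0 < (w j) ^ 2 := by positivity
    linarith
  have hN2D : N ^ 2 ≤ D := by
    have hj : ∀ j, ‖w j‖ ≤ Real.sqrt D := by
      intro j
      rw [Real.norm_eq_abs, ← Real.sqrt_sq_eq_abs]
      apply Real.sqrt_le_sqrt
      have hcs := Finset.sum_mul_sq_le_sq_mul_sq Finset.univ (fun l => A j l) (fun l => y l - x l)
      have hwj : w j = ∑ l, A j l * (y l - x l) := by
        simp [hw, Matrix.mulVec, dotProduct, mul_sub, Finset.sum_sub_distrib]
      rw [hwj]
      calc (∑ l, A j l * (y l - x l)) ^ 2 ≤ (∑ l, (A j l) ^ 2) * ∑ l, (y l - x l) ^ 2 := hcs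
        _ = 1 * D := by rw [hrows j, hD]
        _ = D := one_mul _
    have hle : N ≤ Real.sqrt D := by
      rw [hN]; exact (pi_norm_le_iff_of_nonneg (Real.sqrt_nonneg _)).mpr hj
    calc N ^ 2 ≤ (Real.sqrt D) ^ 2 := pow_le_pow_left₀ (le_of_lt hNpos) hle 2
      _ = D := Real.sq_sqrt hDnn
  have hσD : σ ^ 2 * D ≤ S := by
    have := hσmin (y - x)
    simpa [hD, hS, hw] using this
  -- key inequality
  have hME : 0 ≤ M - E := by linarith
  have hrabs : M - E ≤ |r| := by
    have h1 : |r + ε| - |ε| ≤ |r| := by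
      have := abs_sub_abs_le_abs_sub (r + ε) ε
      simpa using this
    have h2 := hEj i
    rw [hMi]
    rw [hε] at *
    linarith
  have hr2 : (M - E) ^ 2 ≤ r ^ 2 := by
    calc (M - E) ^ 2 ≤ |r| ^ 2 := pow_le_pow_left₀ hME hrabs 2
      _ = r ^ 2 := sq_abs r
  have hε2 : ε ^ 2 ≤ E ^ 2 := by
    calc ε ^ 2 = |ε| ^ 2 := (sq_abs ε).symm
      _ ≤ E ^ 2 := pow_le_pow_left₀ (abs_nonneg _) (hEj i) 2
  have hNM : N ^ 2 ≤ (M + E) ^ 2 := pow_le_pow_left₀ (le_of_lt hNpos) hNle 2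
  have key : N ^ 2 / 4 ≤ r ^ 2 - ε ^ 2 := by
    nlinarith [hres, mul_nonneg (show (0:ℝ) ≤ M - 4 * E by linarith) hEnn,
      mul_nonneg (show (0:ℝ) ≤ M - 4 * E by linarith) (le_of_lt (lt_of_le_of_lt (by linarith : (0:ℝ) ≤ 4 * E) hres)),
      sq_nonneg E]
  -- expansion
  have hcrε : b i - A.mulVec y i = -(r + ε) := by
    have := hf i; linarith
  have hexp : ∑ j, (y' j - x j) ^ 2 = D - r ^ 2 + ε ^ 2 := by
    have hrsum : r = ∑ l, A i l * (y l - x l) := by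
      simp [hr, hw, Matrix.mulVec, dotProduct, mul_sub, Finset.sum_sub_distrib]
    subst hstep
    calc ∑ j, ((y + (b i - A.mulVec y i) • A i) j - x j) ^ 2
        = ∑ l, ((y l - x l) ^ 2 + (2 * (b i - A.mulVec y i)) * (A i l * (y l - x l))
            + (b i - A.mulVec y i) ^ 2 * (A i l) ^ 2) := by
          refine Finset.sum_congr rfl fun l _ => ?_
          simp only [Pi.add_apply, Pi.smul_apply, smul_eq_mul]
          ring
      _ = D + (2 * (b i - A.mulVec y i)) * (∑ l, A i l * (y l - x l))
            + (b i - A.mulVec y i) ^ 2 * ∑ l, (A i l) ^ 2 := by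
          rw [Finset.sum_add_distrib, Finset.sum_add_distrib, ← Finset.mul_sum, ← Finset.mul_sum, hD]
      _ = D - r ^ 2 + ε ^ 2 := by
          rw [hrows i, ← hrsum, hcrε]; ring
  have hγ' : γ = S / N ^ 2 := hγ
  have hγeq : σ ^ 2 / (4 * γ) = σ ^ 2 * N ^ 2 / (4 * S) := by
    rw [hγ']
    field_simp
  have h1 : σ ^ 2 * N ^ 2 ≤ S :=
    le_trans (mul_le_mul_of_nonneg_left hN2D (sq_nonneg σ)) hσD
  constructor
  · rw [hγeq, sub_nonneg, div_le_one (by linarith : (0:ℝ) < 4 * S)]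
    linarith
  · rw [hexp]
    have heq : (1 - σ ^ 2 / (4 * γ)) * D = D - σ ^ 2 * N ^ 2 * D / (4 * S) := by
      rw [hγeq]; ring
    rw [heq]
    have h1 : σ ^ 2 * N ^ 2 * D / (4 * S) ≤ N ^ 2 / 4 := by
      rw [div_le_div_iff₀ (by linarith : (0:ℝ) < 4 * S) (by norm_num : (0:ℝ) < 4)]
      nlinarith [mul_le_mul_of_nonneg_left hσD (sq_nonneg N)]
    linarith


/-- **Accelerated convergence rate (inequality (4) of Corollary 1).**
`A` is an `m × n` real matrix (`m ≥ n`) with full column rank `n` and rows of unit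
Euclidean norm; `σ` denotes its smallest singular value, which is positive and
satisfies `σ ‖v‖ ≤ ‖A v‖` for all `v` (stated with squared Euclidean norms).
`b ∈ ℝ^m`, `x ∈ ℝ^n` is fixed, `e = A x - b`, and `‖·‖` on `Fin m → ℝ` is the sup
(max) norm.  `xs 0, xs 1, …, xs K` are Motzkin iterates started at an arbitrary
`xs 0`, and for every `k < K` we have `‖A (xs k) - b‖_∞ > 4 ‖e‖_∞` and
`A (xs k) ≠ A x`.  With the dynamic ranges
`γ k = ‖A (xs k - x)‖² / ‖A (xs k - x)‖_∞²`, the final iterate satisfies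
`‖xs K - x‖² ≤ (∏_{k<K} (1 - σ²/(4 γ k))) ‖xs 0 - x‖² + 2 m σ⁻² ‖e‖_∞²`.
(An empty product equals one.) -/
theorem motzkin_accelerated_convergence
    {m n : ℕ} (hmn : n ≤ m) (A : Matrix (Fin m) (Fin n) ℝ)
    (hrank : A.rank = n)
    (hrows : ∀ i : Fin m, ∑ j, (A i j) ^ 2 = 1)
    (σ : ℝ) (hσ : 0 < σ)
    (hσmin : ∀ v : Fin n → ℝ, σ ^ 2 * ∑ j, (v j) ^ 2 ≤ ∑ i, (A.mulVec v i) ^ 2)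
    (b : Fin m → ℝ) (x : Fin n → ℝ) (e : Fin m → ℝ)
    (he : e = A.mulVec x - b)
    (K : ℕ) (xs : ℕ → Fin n → ℝ)
    (hiter : ∀ k < K, ∃ i : Fin m,
      (∀ j : Fin m, (A.mulVec (xs k) j - b j) ^ 2 ≤ (A.mulVec (xs k) i - b i) ^ 2) ∧
      xs (k + 1) = xs k + (b i - A.mulVec (xs k) i) • A i)
    (hres : ∀ k < K, 4 * ‖e‖ < ‖A.mulVec (xs k) - b‖)
    (hne : ∀ k < K, A.mulVec (xs k) ≠ A.mulVec x)
    (γ : ℕ → ℝ)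
    (hγ : ∀ k, γ k = (∑ i, (A.mulVec (xs k - x) i) ^ 2) / ‖A.mulVec (xs k - x)‖ ^ 2) :
    ∑ j, (xs K j - x j) ^ 2 ≤
      (∏ k ∈ Finset.range K, (1 - σ ^ 2 / (4 * γ k))) * ∑ j, (xs 0 j - x j) ^ 2
        + 2 * m * (σ ^ 2)⁻¹ * ‖e‖ ^ 2 := by
  have hq : ∀ k < K, 0 ≤ 1 - σ ^ 2 / (4 * γ k) ∧
      ∑ j, (xs (k + 1) j - x j) ^ 2 ≤ (1 - σ ^ 2 / (4 * γ k)) * ∑ j, (xs k j - x j) ^ 2 := by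
    intro k hk
    obtain ⟨i, hmax, hstep⟩ := hiter k hk
    exact motzkin_step hrows hσ hσmin he hmax hstep (hres k hk) (hne k hk) (hγ k)
  have main : ∀ K' ≤ K, ∑ j, (xs K' j - x j) ^ 2 ≤
      (∏ k ∈ Finset.range K', (1 - σ ^ 2 / (4 * γ k))) * ∑ j, (xs 0 j - x j) ^ 2 := by
    intro K'
    induction K' with
    | zero => intro _; simp
    | succ k ih =>
      intro hK'
      have hk : k < K := lt_of_lt_of_le (Nat.lt_succ_self k) hK'
      obtain ⟨hq0, hqle⟩ := hq k hk
      have ih' := ih (le_of_lt hk)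
      rw [Finset.prod_range_succ]
      calc ∑ j, (xs (k + 1) j - x j) ^ 2
          ≤ (1 - σ ^ 2 / (4 * γ k)) * ∑ j, (xs k j - x j) ^ 2 := hqle
        _ ≤ (1 - σ ^ 2 / (4 * γ k)) *
            ((∏ k ∈ Finset.range k, (1 - σ ^ 2 / (4 * γ k))) * ∑ j, (xs 0 j - x j) ^ 2) :=
            mul_le_mul_of_nonneg_left ih' hq0
        _ = (∏ x ∈ Finset.range k, (1 - σ ^ 2 / (4 * γ x))) * (1 - σ ^ 2 / (4 * γ k)) *
            ∑ j, (xs 0 j - x j) ^ 2 := by ring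
  have hC : 0 ≤ 2 * m * (σ ^ 2)⁻¹ * ‖e‖ ^ 2 := by positivity
  linarith [main K le_rfl]
end
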